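/- Let v be a reduced Dyck vector (a Dyck vector of minimal length in its Dyck class, equivalently one not of the form 0 z⁺). If v starts with 0,0 and NU₁([v]) is defined, then mind(NU₁([v])) = mind([v]) + 1. If v starts with 0,1 and NU₁([v]) is defined, then mind(NU₁([v])) = mind([v]). -/

import Mathlib

/-- dinv contribution of an entry coming from extended negative positions. -/
def negContrib (x : ℤ) : ℕ := (if x ≤ -1 then 1 else 0) + (if x ≤ -2 then 1 else 0)

/-- The diagonal inversion statistic of a quasi-Dyck vector, with the
convention `v_k = k - 1` for `k ≤ 0`. -/
def dinv (v : List ℤ) : ℕ :=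
  (Finset.univ.filter (fun p : Fin v.length × Fin v.length =>
      (p.1 : ℕ) < (p.2 : ℕ) ∧ (v.get p.1 - v.get p.2 = 0 ∨ v.get p.1 - v.get p.2 = 1))).card
  + (v.map negContrib).sum

def area (v : List ℤ) : ℤ := v.sum

def defc (v : List ℤ) : ℤ := (v.length.choose 2 : ℤ) - area v - (dinv v : ℤ)

/-- Quasi-Dyck vector: nonempty, starts with 0, consecutive increases ≤ 1. -/
def IsQDV (v : List ℤ) : Prop :=
  v.head? = some 0 ∧ ∀ i : ℕ, i + 1 < v.length → v.getD (i + 1) 0 ≤ v.getD i 0 + 1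

def IsDyck (v : List ℤ) : Prop := IsQDV v ∧ ∀ x ∈ v, 0 ≤ x

def stepRel (v w : List ℤ) : Prop := w = 0 :: v.map (· + 1)

def dyckEquiv : List ℤ → List ℤ → Prop := Relation.EqvGen stepRel

def dyckSetoid : Setoid (List ℤ) := Relation.EqvGen.setoid stepRel

abbrev DyckClass := Quotient dyckSetoid

def cls (v : List ℤ) : DyckClass := Quotient.mk dyckSetoid v

/-- Reduced Dyck vector: a Dyck vector that is not `0 z⁺` for a Dyck vector `z`. -/
def IsReducedDV (v : List ℤ) : Prop :=
  IsDyck v ∧ ¬ ∃ z : List ℤ, IsDyck z ∧ v = 0 :: z.map (· + 1)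

/-- The leader of a QDV: the largest `d` such that `v` starts with `0,1,...,d`. -/
def leader (v : List ℤ) : ℕ :=
  Nat.findGreatest (fun d => ∀ i, i ≤ d → v.getD i 0 = (i : ℤ)) (v.length - 1)

/-- Delete the leader symbol and append `leader - 1`. -/
def nuStep (v : List ℤ) : List ℤ :=
  v.take (leader v) ++ v.drop (leader v + 1) ++ [(leader v : ℤ) - 1]

def nuApplies (v : List ℤ) : Prop :=
  IsQDV v ∧ 2 ≤ v.length ∧ 0 ≤ v.getD 1 0 ∧ (leader v : ℤ) ≤ v.getLastD 0 + 2

/-- The map NU₁ on Dyck classes, as a relation. -/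
def nuClassRel (c c' : DyckClass) : Prop :=
  ∃ v, nuApplies v ∧ c = cls v ∧ c' = cls (nuStep v)

def stepOk (A : List ℤ) : Prop := ∀ i : ℕ, i + 1 < A.length → A.getD (i + 1) 0 ≤ A.getD i 0 + 1

def okA (A : List ℤ) : Prop :=
  A = [] ∨ ((∀ x ∈ A, x ≤ 2) ∧ 0 ≤ A.getLastD 0 ∧ stepOk A)

def okB (B : List ℤ) : Prop :=
  B = [] ∨ ((∀ x ∈ B, x ≤ 2) ∧ B.headD 0 ≤ 1 ∧ -1 ≤ B.getLastD 0 ∧ stepOk B)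

/-- The map NU₂ on Dyck classes, as a relation. -/
def nu2ClassRel (c c' : DyckClass) : Prop :=
  (∃ (h : ℕ) (A : List ℤ), 2 ≤ h ∧ okA A ∧
      c = cls ([0, 1] ++ List.replicate h (2:ℤ) ++ A ++ List.replicate (h - 1) (-1)) ∧
      c' = cls (List.replicate h (0:ℤ) ++ [1] ++ A ++ List.replicate h 1)) ∨
  (∃ (k : ℕ) (B : List ℤ), 1 ≤ k ∧ okB B ∧
      c = cls ([0, 1] ++ List.replicate k (2:ℤ) ++ B ++ List.replicate k (-1)) ∧
      c' = cls (List.replicate (k + 1) (0:ℤ) ++ B ++ [0] ++ List.replicate k 1))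

/-- The extended next-up map NU = NU₁ ∪ NU₂, as a relation on Dyck classes. -/
def nuRel (c c' : DyckClass) : Prop := nuClassRel c c' ∨ nu2ClassRel c c'

/-- An integer partition, given by its weakly decreasing list of positive parts. -/
def IsPartitionList (l : List ℕ) : Prop := l.Pairwise (· ≥ ·) ∧ ∀ x ∈ l, 0 < x

/-- `phi l n` = the QDV `(0 - λ_n, 1 - λ_{n-1}, ..., (n-1) - λ_1)`. -/
def phi (l : List ℕ) (n : ℕ) : List ℤ :=
  List.ofFn (fun i : Fin n => (i : ℤ) - (l.getD (n - 1 - (i : ℕ)) 0 : ℤ))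

def nuOne (g : List ℕ) : List ℕ :=
  (g.length + 1) :: (g.map (· - 1)).filter (fun x => 0 < x)

def ndOne (g : List ℕ) : List ℕ :=
  g.tail.map (· + 1) ++ List.replicate (g.headD 0 - g.length) 1

/-- dinv of a partition: number of cells with arm - leg ∈ {0,1}. -/
def pdinv (l : List ℕ) : ℕ :=
  (Finset.univ.filter (fun c : Fin l.length × Fin (l.headD 0) =>
    (c.2 : ℕ) < l.get c.1 ∧
      (l.get c.1 - 1 - (c.2 : ℕ) =
          (Finset.univ.filter (fun i' : Fin l.length =>
            (c.1 : ℕ) < (i' : ℕ) ∧ (c.2 : ℕ) < l.get i')).card ∨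
        l.get c.1 - 1 - (c.2 : ℕ) =
          (Finset.univ.filter (fun i' : Fin l.length =>
            (c.1 : ℕ) < (i' : ℕ) ∧ (c.2 : ℕ) < l.get i')).card + 1))).card

/-- `bWord [n_1, ..., n_r]` = `0 1^{n_1} 0 1^{n_2} ⋯ 0 1^{n_r}`. -/
def bWord (ns : List ℕ) : List ℤ :=
  (ns.map (fun m => (0:ℤ) :: List.replicate m 1)).flatten

/-- `msize [n_1, ..., n_r] = Σ i·n_i`, the size of the partition `(r^{n_r},...,1^{n_1})`. -/
def msize (ns : List ℕ) : ℕ :=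
  (List.zipWith (fun m i => m * i) ns (List.range' 1 ns.length)).sum

/-- The reduced Dyck vector `0 B_μ` of the tail initiator of a partition. -/
def tiVec (l : List ℕ) : List ℤ :=
  (0:ℤ) :: ((List.range' 1 (l.headD 0)).map
    (fun i => (0:ℤ) :: List.replicate (l.count i) (1:ℤ))).flatten

/-- `c` is the second-order tail initiator of the partition `l`: obtained from
`[0 B_μ]` by iterating the extended next-down map as long as possible. -/
def IsTI2 (l : List ℕ) (c : DyckClass) : Prop :=
  Relation.ReflTransGen (fun x y => nuRel y x) (cls (tiVec l)) c ∧ ∀ d, ¬ nuRel d c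

/-- `m` is the minimum triangle height of the Dyck class `c`. -/
def mindIs (c : DyckClass) (m : ℕ) : Prop :=
  ∃ v, IsReducedDV v ∧ c = cls v ∧ v.length = m

/-- Flagpole partition: `|μ| + 8 ≤ 2 mind(TI₂(μ))`. -/
def IsFlagpole (l : List ℕ) : Prop :=
  ∃ c m, IsTI2 l c ∧ mindIs c m ∧ l.sum + 8 ≤ 2 * m

/-- The Dyck vector `v(λ,a,ε) = 0 0 1 2^{a-ε} B_λ⁺ 1^ε`. -/
def vLam (ns : List ℕ) (a ε : ℕ) : List ℤ :=
  [0, 0, 1] ++ List.replicate (a - ε) (2:ℤ) ++ (bWord ns).map (· + 1) ++ List.replicate ε 1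

lemma aux_getD_eq_getElem (l : List ℤ) {i : ℕ} (h : i < l.length) : l.getD i 0 = l[i] :=
  List.getD_eq_getElem l 0 h

lemma aux_getD_map (f : ℤ → ℤ) (w : List ℤ) {i : ℕ} (h : i < w.length) :
    (w.map f).getD i 0 = f (w.getD i 0) := by
  rw [aux_getD_eq_getElem _ (by simpa using h), List.getElem_map, aux_getD_eq_getElem _ h]

lemma aux_getD_nonneg {v : List ℤ} (h : ∀ x ∈ v, 0 ≤ x) (i : ℕ) : 0 ≤ v.getD i 0 := by
  rcases lt_or_ge i v.length with hi | hi
  · rw [aux_getD_eq_getElem v hi]; exact h _ (List.getElem_mem hi)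
  · rw [List.getD_eq_getElem?_getD, List.getElem?_eq_none hi]; rfl

lemma aux_getLastD {v : List ℤ} (h : v ≠ []) : v.getLastD 0 = v.getD (v.length - 1) 0 := by
  have hl : v.length - 1 < v.length := by
    have := List.length_pos_iff.mpr h; omega
  rw [List.getLastD_eq_getLast?, List.getLast?_eq_getElem?, aux_getD_eq_getElem v hl,
    List.getElem?_eq_getElem hl]
  rfl

lemma aux_head? {l : List ℤ} (h : l ≠ []) : l.head? = some (l.getD 0 0) := by
  cases l with
  | nil => simp at h
  | cons a t => simp

lemma aux_hasZero {v : List ℤ} (hv : IsReducedDV v) (h2 : 2 ≤ v.length) :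
    ∃ j, 1 ≤ j ∧ j < v.length ∧ v.getD j 0 = 0 := by
  by_contra hcon
  push_neg at hcon
  have hpos : ∀ j, 1 ≤ j → j < v.length → 1 ≤ v.getD j 0 := by
    intro j h1 hj
    have h3 := aux_getD_nonneg hv.1.2 j
    have h4 := hcon j h1 hj
    omega
  obtain ⟨⟨hhead, hstep⟩, hnn⟩ := hv.1
  obtain ⟨a, t, rfl⟩ : ∃ a t, v = a :: t := by
    cases v with
    | nil => simp at hhead
    | cons a t => exact ⟨a, t, rfl⟩
  have ha : a = 0 := by simpa using hhead
  subst ha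
  obtain ⟨b, t', rfl⟩ : ∃ b t', t = b :: t' := by
    cases t with
    | nil => simp at h2
    | cons b t' => exact ⟨b, t', rfl⟩
  have hb1 : b ≤ 1 := by have := hstep 0 (by simp); simpa using this
  have hb2 : 1 ≤ b := by have := hpos 1 le_rfl (by simp); simpa using this
  have hb : b = 1 := le_antisymm hb1 hb2
  subst hb
  apply hv.2
  refine ⟨(1 :: t').map (· - 1), ⟨⟨by simp, ?_⟩, ?_⟩, ?_⟩
  · -- step condition for z
    intro i hi
    simp only [List.length_map, List.length_cons] at hi
    rw [aux_getD_map _ _ (by simp only [List.length_cons]; omega),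
        aux_getD_map _ _ (by simp only [List.length_cons]; omega)]
    have h5 := hstep (i + 1) (by simp only [List.length_cons]; omega)
    simp only [List.getD_cons_succ] at h5
    simp only [List.getD_cons_succ]
    omega
  · -- nonnegativity of z
    intro x hx
    rw [List.mem_map] at hx
    obtain ⟨y, hy, rfl⟩ := hx
    rw [List.mem_iff_getElem] at hy
    obtain ⟨n, hn, rfl⟩ := hy
    have h6 := hpos (n + 1) (by omega)
      (by simp only [List.length_cons] at hn ⊢; omega)
    rw [List.getD_cons_succ, aux_getD_eq_getElem _ hn] at h6
    show 0 ≤ (1 :: t')[n] - 1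
    omega
  · simp only [List.map_map]
    have h7 : ((· + 1) ∘ (· - 1) : ℤ → ℤ) = id := by funext x; simp
    rw [h7, List.map_id]

lemma aux_reduced_of_zero {u : List ℤ} (hu : IsDyck u)
    (h : ∃ j, 1 ≤ j ∧ j < u.length ∧ u.getD j 0 = 0) : IsReducedDV u := by
  refine ⟨hu, ?_⟩
  rintro ⟨z, hz, rfl⟩
  obtain ⟨j, hj1, hj2, hj3⟩ := h
  simp only [List.length_cons, List.length_map] at hj2
  obtain ⟨k, rfl⟩ : ∃ k, j = k + 1 := ⟨j - 1, by omega⟩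
  have hk : k < z.length := by omega
  rw [List.getD_cons_succ, aux_getD_map _ _ hk] at hj3
  have h0 := aux_getD_nonneg hz.2 k
  have hj3' : z.getD k 0 + 1 = 0 := hj3
  omega
theorem stmt14 (v : List ℤ) (hv : IsReducedDV v) :
    (v.take 2 = [0, 0] →
      nuApplies v ∧
        ∃ u, IsReducedDV u ∧ dyckEquiv u (nuStep v) ∧ u.length = v.length + 1) ∧
    (v.take 2 = [0, 1] → nuApplies v →
      ∃ u, IsReducedDV u ∧ dyckEquiv u (nuStep v) ∧ u.length = v.length) := by
  constructor
  · -- Part 1 : v starts with 0,0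
    intro h2
    obtain ⟨t, rfl⟩ : ∃ t, v = 0 :: 0 :: t := by
      refine ⟨v.drop 2, ?_⟩
      nth_rewrite 1 [← List.take_append_drop 2 v]
      rw [h2]
      rfl
    obtain ⟨⟨hhead, hstep⟩, hnn⟩ := hv.1
    have hlead : leader (0 :: 0 :: t : List ℤ) = 0 := by
      rw [leader, Nat.findGreatest_eq_zero_iff]
      intro m hm _ hP
      have := hP 1 hm
      simp at this
    have hns : nuStep (0 :: 0 :: t : List ℤ) = (0 :: t) ++ [(-1 : ℤ)] := by
      rw [nuStep, hlead]
      norm_num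
    have htnn : ∀ i < t.length, (0:ℤ) ≤ t.getD i 0 := by
      intro i hi
      exact aux_getD_nonneg (fun x hx => hnn x (by simp [hx])) i
    have hts : ∀ m, m + 1 < t.length → t.getD (m+1) 0 ≤ t.getD m 0 + 1 := by
      intro m hm
      have := hstep (m + 2) (by simp only [List.length_cons]; omega)
      simpa using this
    have ht0 : 0 < t.length → t.getD 0 0 ≤ 1 := by
      intro h
      have := hstep 1 (by simp only [List.length_cons]; omega)
      simpa using this
    refine ⟨⟨hv.1.1, by simp, by simp, ?_⟩, ?_⟩
    · -- leader cast condition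
      rw [hlead, aux_getLastD (by simp)]
      have h0 := aux_getD_nonneg hnn ((0 :: 0 :: t : List ℤ).length - 1)
      simp only [Nat.cast_zero]
      omega
    · -- the new reduced vector
      refine ⟨(0 : ℤ) :: (nuStep (0 :: 0 :: t)).map (· + 1), ?_,
        Relation.EqvGen.symm _ _ (Relation.EqvGen.rel _ _ rfl), ?_⟩
      · -- reducedness
        rw [hns]
        have hU : ((0:ℤ) :: ((0 :: t) ++ [(-1:ℤ)]).map (· + 1)) =
            0 :: 1 :: (t.map (· + 1) ++ [(0:ℤ)]) := by
          simp
        rw [hU]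
        have hM : ∀ k, (t.map (· + 1) ++ [(0:ℤ)]).getD k 0 =
            if k < t.length then t.getD k 0 + 1 else if k = t.length then 0 else 0 := by
          intro k
          rcases lt_trichotomy k t.length with hk | hk | hk
          · rw [List.getD_eq_getElem?_getD, List.getElem?_append,
              if_pos (by simpa using hk), List.getElem?_map,
              List.getElem?_eq_getElem hk, if_pos hk, aux_getD_eq_getElem _ hk]
            rfl
          · subst hk
            rw [List.getD_eq_getElem?_getD, List.getElem?_append,
              if_neg (by simp)]
            simp
          · rw [List.getD_eq_getElem?_getD, List.getElem?_append,
              if_neg (by simp only [List.length_map]; omega),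
              List.getElem?_eq_none (by simp only [List.length_append, List.length_map]; simp; omega),
              if_neg (by omega), if_neg (by omega)]
            rfl
        apply aux_reduced_of_zero
        · refine ⟨⟨by simp, ?_⟩, ?_⟩
          · -- step condition
            intro i hi
            simp only [List.length_cons, List.length_append, List.length_map, List.length_nil] at hi
            match i with
            | 0 => simp
            | 1 =>
              simp only [List.getD_cons_succ, List.getD_cons_zero]
              rw [hM 0]
              rcases Nat.lt_or_ge 0 t.length with hc | hc
              · rw [if_pos hc]
                have := ht0 hc
                omega
              · rw [if_neg (by omega)]
                split <;> omega
            | (m+2) =>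
              simp only [List.getD_cons_succ]
              rw [hM (m+1), hM m]
              rcases lt_trichotomy (m+1) t.length with hc | hc | hc
              · rw [if_pos hc, if_pos (show m < t.length by omega)]
                have h8 := hts m hc
                omega
              · have hcm : m < t.length := by omega
                rw [if_neg (show ¬ m + 1 < t.length by omega), if_pos hc, if_pos hcm]
                have h9 := htnn m hcm
                omega
              · exfalso
                omega
          · -- nonnegativity
            intro x hx
            rcases List.mem_cons.mp hx with rfl | hx
            · exact le_refl 0
            rcases List.mem_cons.mp hx with rfl | hx
            · exact one_pos.le
            rcases List.mem_append.mp hx with hx | hx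
            · obtain ⟨y, hy, rfl⟩ := List.mem_map.mp hx
              have := hnn y (by simp [hy])
              omega
            · have hx0 : x = 0 := by simpa using hx
              omega
        · refine ⟨t.length + 2, by omega, ?_, ?_⟩
          · simp only [List.length_cons, List.length_append, List.length_map, List.length_nil]
            omega
          · simp only [List.getD_cons_succ]
            rw [hM t.length]
            simp
      · -- length
        rw [hns]
        simp only [List.length_cons, List.length_map, List.length_append, List.length_nil]
  · -- Part 2 : v starts with 0,1
    intro h2 hna
    obtain ⟨t, rfl⟩ : ∃ t, v = 0 :: 1 :: t := by
      refine ⟨v.drop 2, ?_⟩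
      nth_rewrite 1 [← List.take_append_drop 2 v]
      rw [h2]
      rfl
    obtain ⟨⟨hhead, hstep⟩, hnn⟩ := hv.1
    have hld : leader (0 :: 1 :: t : List ℤ) =
        Nat.findGreatest (fun d => ∀ i, i ≤ d → (0 :: 1 :: t : List ℤ).getD i 0 = (i : ℤ))
          ((0 :: 1 :: t : List ℤ).length - 1) := rfl
    have hP1 : ∀ i ≤ 1, (0 :: 1 :: t : List ℤ).getD i 0 = (i : ℤ) := by
      intro i hi
      interval_cases i <;> simp
    have hd1 : 1 ≤ leader (0 :: 1 :: t : List ℤ) := by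
      rw [hld]
      exact Nat.le_findGreatest (by simp only [List.length_cons]; omega) hP1
    have hdle : leader (0 :: 1 :: t : List ℤ) ≤ t.length + 1 := by
      rw [hld]
      exact le_trans (Nat.findGreatest_le
        (P := fun d => ∀ i, i ≤ d → (0 :: 1 :: t : List ℤ).getD i 0 = (i : ℤ)) _)
        (by simp only [List.length_cons]; omega)
    have hspec : ∀ i ≤ leader (0 :: 1 :: t : List ℤ), (0 :: 1 :: t : List ℤ).getD i 0 = (i : ℤ) := by
      rw [hld]
      exact Nat.findGreatest_spec (m := 1) (n := (0 :: 1 :: t : List ℤ).length - 1)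
        (P := fun d => ∀ i, i ≤ d → (0 :: 1 :: t : List ℤ).getD i 0 = (i : ℤ))
        (by simp only [List.length_cons]; omega) hP1
    obtain ⟨j, hj1, hj2, hj3⟩ := aux_hasZero hv (by simp only [List.length_cons]; omega)
    simp only [List.length_cons] at hj2
    have hjd : leader (0 :: 1 :: t : List ℤ) < j := by
      by_contra hcon
      push_neg at hcon
      have h5 := hspec j hcon
      rw [hj3] at h5
      omega
    have hd2 : leader (0 :: 1 :: t : List ℤ) ≤ t.length := by omega
    have hvd : (0 :: 1 :: t : List ℤ).getD (leader (0 :: 1 :: t : List ℤ) + 1) 0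
        ≤ (leader (0 :: 1 :: t : List ℤ) : ℤ) := by
      have hne : (0 :: 1 :: t : List ℤ).getD (leader (0 :: 1 :: t : List ℤ) + 1) 0
          ≠ ((leader (0 :: 1 :: t : List ℤ) + 1 : ℕ) : ℤ) := by
        intro h
        have hPk : ∀ i, i ≤ leader (0 :: 1 :: t : List ℤ) + 1 →
            (0 :: 1 :: t : List ℤ).getD i 0 = (i : ℤ) := by
          intro i hi
          rcases Nat.lt_or_ge i (leader (0 :: 1 :: t : List ℤ) + 1) with hlt | hge
          · exact hspec i (by omega)
          · have hie : i = leader (0 :: 1 :: t : List ℤ) + 1 := by omega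
            rw [hie]
            exact h
        exact Nat.findGreatest_is_greatest
          (P := fun d => ∀ i, i ≤ d → (0 :: 1 :: t : List ℤ).getD i 0 = (i : ℤ))
          (n := (0 :: 1 :: t : List ℤ).length - 1)
          (by rw [← hld]; omega) (by simp only [List.length_cons]; omega) hPk
      have hle := hstep (leader (0 :: 1 :: t : List ℤ))
        (by simp only [List.length_cons]; omega)
      rw [hspec _ le_rfl] at hle
      push_cast at hne
      omega
    have hlastD : (leader (0 :: 1 :: t : List ℤ) : ℤ)
        ≤ (0 :: 1 :: t : List ℤ).getD (t.length + 1) 0 + 2 := by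
      have h6 := hna.2.2.2
      rwa [aux_getLastD (by simp)] at h6
    -- notation
    have htl : (List.take (leader (0 :: 1 :: t : List ℤ)) (0 :: 1 :: t : List ℤ)).length
        = leader (0 :: 1 :: t : List ℤ) := by
      simp only [List.length_take, List.length_cons]
      omega
    have htdl : (List.take (leader (0 :: 1 :: t : List ℤ)) (0 :: 1 :: t : List ℤ)
        ++ List.drop (leader (0 :: 1 :: t : List ℤ) + 1) (0 :: 1 :: t : List ℤ)).length
        = t.length + 1 := by
      simp only [List.length_append, List.length_take, List.length_drop, List.length_cons]
      omega
    have hlenu : (nuStep (0 :: 1 :: t : List ℤ)).length = t.length + 2 := by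
      simp only [nuStep, List.length_append, htdl]
      rfl
    have hu1 : ∀ i < leader (0 :: 1 :: t : List ℤ),
        (nuStep (0 :: 1 :: t : List ℤ)).getD i 0 = (0 :: 1 :: t : List ℤ).getD i 0 := by
      intro i hi
      rw [nuStep, List.getD_eq_getElem?_getD, List.getElem?_append,
        if_pos (by rw [htdl]; omega), List.getElem?_append, if_pos (by rw [htl]; omega),
        List.getElem?_take, if_pos hi, ← List.getD_eq_getElem?_getD]
    have hu2 : ∀ i, leader (0 :: 1 :: t : List ℤ) ≤ i → i < t.length + 1 →
        (nuStep (0 :: 1 :: t : List ℤ)).getD i 0 = (0 :: 1 :: t : List ℤ).getD (i + 1) 0 := by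
      intro i hdi hin
      rw [nuStep, List.getD_eq_getElem?_getD, List.getElem?_append,
        if_pos (by rw [htdl]; omega), List.getElem?_append, htl, if_neg (by omega),
        List.getElem?_drop]
      have he : leader (0 :: 1 :: t : List ℤ) + 1 + (i - leader (0 :: 1 :: t : List ℤ))
          = i + 1 := by omega
      rw [he, ← List.getD_eq_getElem?_getD]
    have hu3 : (nuStep (0 :: 1 :: t : List ℤ)).getD (t.length + 1) 0
        = (leader (0 :: 1 :: t : List ℤ) : ℤ) - 1 := by
      rw [nuStep, List.getD_eq_getElem?_getD, List.getElem?_append, htdl,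
        if_neg (by omega)]
      have he : t.length + 1 - (t.length + 1) = 0 := by omega
      rw [he]
      rfl
    refine ⟨nuStep (0 :: 1 :: t), ?_, Relation.EqvGen.refl _, by rw [hlenu]; rfl⟩
    apply aux_reduced_of_zero
    · refine ⟨⟨?_, ?_⟩, ?_⟩
      · -- head
        rw [aux_head? (by intro hemp; have := congrArg List.length hemp; rw [hlenu] at this; simp at this)]
        rw [hu1 0 (by omega)]
        rfl
      · -- step condition
        intro i hi
        rw [hlenu] at hi
        rcases lt_trichotomy (i + 1) (leader (0 :: 1 :: t : List ℤ)) with hc | hc | hc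
        · rw [hu1 (i + 1) hc, hu1 i (by omega)]
          exact hstep i (by simp only [List.length_cons]; omega)
        · -- i + 1 = leader
          rw [hu1 i (by omega), hu2 (i + 1) (by omega) (by omega)]
          rw [hspec i (by omega)]
          rw [show i + 1 + 1 = leader (0 :: 1 :: t : List ℤ) + 1 by omega]
          omega
        · -- leader < i + 1, i.e. leader ≤ i
          rcases Nat.lt_or_ge (i + 1) (t.length + 1) with hc2 | hc2
          · rw [hu2 i (by omega) (by omega), hu2 (i + 1) (by omega) hc2]
            exact hstep (i + 1) (by simp only [List.length_cons]; omega)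
          · have hieq : i + 1 = t.length + 1 := by omega
            rw [hieq, hu3, hu2 i (by omega) (by omega), show i + 1 = t.length + 1 from hieq]
            omega
      · -- nonnegativity
        intro x hx
        rw [nuStep] at hx
        rcases List.mem_append.mp hx with hx | hx
        · rcases List.mem_append.mp hx with hx | hx
          · exact hnn x (List.take_subset _ _ hx)
          · exact hnn x (List.drop_subset _ _ hx)
        · have hxe : x = (leader (0 :: 1 :: t : List ℤ) : ℤ) - 1 := by simpa using hx
          omega
    · -- a zero entry
      obtain ⟨k, rfl⟩ : ∃ k, j = k + 1 := ⟨j - 1, by omega⟩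
      refine ⟨k, by omega, by rw [hlenu]; omega, ?_⟩
      rw [hu2 k (by omega) (by omega)]
      exact hj3
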